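/- For real numbers $a, b$ with $a \le 0 \le b$, the integral $\int_0^{\infty} \frac{(\kappa_q(a) - \kappa_q(b))^2}{q}\, dq \le 10(a-b)^2$, where for $q > 0$, $\kappa_q(y) := \min(q, \max(q/2, y))$. -/
import Mathlib


open MeasureTheory

/-- The clamping function `κ_q(y) = min(q, max(q/2, y))`. -/
noncomputable def kappa (q y : ℝ) : ℝ := min q (max (q / 2) y)

theorem kappa_integral_case_nonpos (a b : ℝ) (ha : a ≤ 0) (hb : 0 ≤ b) :
    (∫ q in Set.Ioi (0 : ℝ), (kappa q a - kappa q b) ^ 2 / q) ≤ 10 * (a - b) ^ 2 := by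
  set g : ℝ → ℝ := Set.indicator (Set.Ioc 0 (2*b)) (fun q => q/4) with hg
  have hgint : Integrable g (volume.restrict (Set.Ioi (0:ℝ))) := by
    rw [hg, integrable_indicator_iff measurableSet_Ioc]
    exact ((continuous_id.div_const 4).integrableOn_Ioc).mono_measure
      Measure.restrict_le_self
  have h1 : (∫ q in Set.Ioi (0 : ℝ), (kappa q a - kappa q b) ^ 2 / q) ≤
      ∫ q in Set.Ioi (0:ℝ), g q := by
    apply integral_mono_of_nonneg
    · filter_upwards [ae_restrict_mem measurableSet_Ioi] with q hq
      have hq : (0:ℝ) < q := hq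
      positivity
    · exact hgint
    · filter_upwards [ae_restrict_mem measurableSet_Ioi] with q hq
      have hq : (0:ℝ) < q := hq
      have hka : kappa q a = q/2 := by
        simp only [kappa]
        rw [max_eq_left (ha.trans (by linarith)), min_eq_right (by linarith)]
      by_cases h2b : q ≤ 2*b
      · have hgq : g q = q/4 := by
          rw [hg, Set.indicator_of_mem (Set.mem_Ioc.mpr ⟨hq, h2b⟩)]
        have hl : q/2 ≤ kappa q b := le_min (by linarith) (le_max_left _ _)
        have hr : kappa q b ≤ q := min_le_left _ _
        rw [hka, hgq, div_le_div_iff₀ hq (by norm_num : (0:ℝ) < 4)]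
        nlinarith
      · have hgq : g q = 0 := by
          rw [hg, Set.indicator_of_notMem (by simp [h2b])]
        have hkb : kappa q b = q/2 := by
          simp only [kappa]
          rw [max_eq_left (by linarith), min_eq_right (by linarith)]
        rw [hka, hkb, hgq]
        simp
  have h2 : (∫ q in Set.Ioi (0:ℝ), g q) = b^2/2 := by
    rw [hg, integral_indicator measurableSet_Ioc,
      Measure.restrict_restrict measurableSet_Ioc,
      Set.inter_eq_left.mpr Set.Ioc_subset_Ioi_self,
      ← intervalIntegral.integral_of_le (by linarith : (0:ℝ) ≤ 2*b)]
    rw [intervalIntegral.integral_div, integral_id]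
    ring
  have h3 : (∫ q in Set.Ioi (0 : ℝ), (kappa q a - kappa q b) ^ 2 / q) ≤ b^2/2 :=
    h1.trans_eq h2
  nlinarith [sq_nonneg a, mul_nonneg (neg_nonneg.mpr ha) hb]
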